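/- Let t ≥ 1, k_i' ≥ 1 for 1 ≤ i ≤ t, and κ = Σ_{i=1}^t k_i'. Let Ĥ be a graph on n vertices with vertex partition U ⊔ W. If e(U) + e(U,W) > (4κ + t - 2)·n/2 (where e(U) is the number of edges within U and e(U,W) the number of edges between U and W), then Ĥ contains t pairwise vertex-disjoint paths, the i-th on 2k_i' + 1 vertices, with all endpoints in U. -/

import Mathlib

/-- `eW G U` is the number of edges of `G` with both endpoints in `U`. -/
noncomputable def eW {V : Type*} (G : SimpleGraph V) (U : Set V) : ℕ :=
  {e ∈ G.edgeSet | ∀ v ∈ e, v ∈ U}.ncard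

/-- `eB G U W` is the number of edges of `G` with one endpoint in `U` and the
other in `W`. -/
noncomputable def eB {V : Type*} (G : SimpleGraph V) (U W : Set V) : ℕ :=
  {e ∈ G.edgeSet | ∃ u ∈ U, ∃ w ∈ W, e = s(u, w)}.ncard

set_option linter.unusedSectionVars false


open List

section comb
variable {S : ℕ → Prop} {L : ℕ}

lemma lemmaL1 (hP : ∀ j, j + 1 ≤ L → S j ∨ S (j+1)) (hL : S L) {k p : ℕ} (hk : 1 ≤ k)
    (hp : S p) (hpL : p + 4*k ≤ L + 2) :
    ∃ s, p ≤ s ∧ s ≤ p + 2*k - 1 ∧ s + 2*k ≤ L ∧ S s ∧ S (s + 2*k) := by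
  by_contra hcon
  push_neg at hcon
  -- hcon : ∀ s, p ≤ s → s ≤ p + 2*k-1 → s + 2k ≤ L → S s → ¬ S (s+2k)
  have pat : ∀ d, d ≤ 2*k - 2 →
      (Even d → S (p+d) ∧ ¬ S (p+d+2*k)) ∧ (¬ Even d → ¬ S (p+d) ∧ S (p+d+2*k)) := by
    intro d
    induction d with
    | zero =>
      intro _
      refine ⟨fun _ => ⟨hp, ?_⟩, fun h => absurd (Even.zero) h⟩
      have := hcon p le_rfl (by omega) (by omega)
      simpa using this hp
    | succ d ih =>
      intro hd
      have hd' : d ≤ 2*k - 2 := by omega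
      obtain ⟨ihe, iho⟩ := ih hd'
      by_cases he : Even (d+1)
      · have hod : ¬ Even d := by simpa [Nat.even_add_one] using he
        obtain ⟨h1, h2⟩ := iho hod
        have hS : S (p + (d+1)) := by
          have := hP (p + d) (by omega)
          rcases this with h | h
          · exact absurd h h1
          · simpa [Nat.add_assoc] using h
        refine ⟨fun _ => ⟨hS, ?_⟩, fun h => absurd he h⟩
        exact hcon (p + (d+1)) (by omega) (by omega) (by omega) hS
      · have hed : Even d := by simpa [Nat.even_add_one] using he
        obtain ⟨h1, h2⟩ := ihe hed
        have hS : S (p + (d+1) + 2*k) := by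
          have := hP (p + d + 2*k) (by omega)
          rcases this with h | h
          · exact absurd h h2
          · have : p + d + 2*k + 1 = p + (d+1) + 2*k := by omega
            rwa [this] at h
        refine ⟨fun h => absurd h he, fun _ => ⟨?_, hS⟩⟩
        intro hSpd
        exact hcon (p + (d+1)) (by omega) (by omega) (by omega) hSpd hS
  by_cases hcase : p + 4*k ≤ L + 1
  · -- large L case : contradiction at positions p+2k-1, p+2k
    have h0 : ¬ S (p + 2*k) := by
      have := hcon p le_rfl (by omega) (by omega) hp
      simpa using this
    have h1 : ¬ S (p + 2*k - 1) := by
      -- from pattern at d = 2k-2 : ¬ S (p + 4k - 2), then P gives S (p+4k-1), then hcon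
      have hpat := (pat (2*k-2) le_rfl).1 (by
        have : 2*k - 2 = 2*(k-1) := by omega
        rw [this]; exact even_two_mul _)
      have h42 : ¬ S (p + 4*k - 2) := by
        have : p + (2*k-2) + 2*k = p + 4*k - 2 := by omega
        rw [this] at hpat; exact hpat.2
      have h41 : S (p + 4*k - 1) := by
        have := hP (p + 4*k - 2) (by omega)
        rcases this with h | h
        · exact absurd h h42
        · have : p + 4*k - 2 + 1 = p + 4*k - 1 := by omega
          rwa [this] at h
      intro hS
      have := hcon (p + 2*k - 1) (by omega) (by omega) (by omega) hS
      have heq : p + 2*k - 1 + 2*k = p + 4*k - 1 := by omega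
      rw [heq] at this; exact this h41
    have := hP (p + 2*k - 1) (by omega)
    have heq : p + 2*k - 1 + 1 = p + 2*k := by omega
    rw [heq] at this
    tauto
  · -- L = p + 4k - 2 exactly
    have hLeq : L = p + 4*k - 2 := by omega
    have hpat := (pat (2*k-2) le_rfl).1 (by
      have : 2*k - 2 = 2*(k-1) := by omega
      rw [this]; exact even_two_mul _)
    have : p + (2*k-2) + 2*k = L := by omega
    rw [this] at hpat
    exact hpat.2 hL

end comb

section comb2
variable {S : ℕ → Prop} {L : ℕ}

lemma lemmaEXT (hP : ∀ j, j + 1 ≤ L → S j ∨ S (j+1)) (hL : S L) :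
    ∀ (t : ℕ) (k : Fin t → ℕ), (∀ i, 1 ≤ k i) → ∀ p, S p →
      p + 4*(∑ i, k i) + t ≤ L + 3 →
      ∃ s : Fin t → ℕ, (∀ i, p ≤ s i ∧ S (s i) ∧ S (s i + 2*k i) ∧ s i + 2*k i ≤ L) ∧
        (∀ i j : Fin t, i < j → s i + 2*k i < s j) := by
  intro t
  induction t with
  | zero => exact fun k _ p _ _ => ⟨fun i => i.elim0, fun i => i.elim0, fun i => i.elim0⟩
  | succ t ih =>
    intro k hk p hp hbound
    have hsum : ∑ i, k i = k 0 + ∑ i : Fin t, k i.succ := Fin.sum_univ_succ k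
    have hk0 : 1 ≤ k 0 := hk 0
    obtain ⟨s0, hs0p, hs0le, hs0L, hSs0, hSe0⟩ :=
      lemmaL1 hP hL (hk 0) hp (by
        have ht : t ≤ 4 * (∑ i : Fin t, k i.succ) := by
          calc t = ∑ i : Fin t, 1 := by simp
          _ ≤ ∑ i : Fin t, k i.succ := Finset.sum_le_sum (fun i _ => hk i.succ)
          _ ≤ 4 * _ := by omega
        omega)
    set e0 := s0 + 2 * k 0 with he0
    rcases Nat.eq_zero_or_pos t with rfl | htpos
    · refine ⟨fun _ => s0, fun i => ?_, fun i j hij => ?_⟩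
      · have hi : i = 0 := Fin.eq_zero i
        rw [hi]
        exact ⟨hs0p, hSs0, hSe0, hs0L⟩
      · have hi : i = 0 := Fin.eq_zero i
        have hj : j = 0 := Fin.eq_zero j
        rw [hi, hj] at hij
        exact absurd hij (lt_irrefl _)
    · -- t ≥ 1 : find next start
      have htsum : t ≤ ∑ i : Fin t, k i.succ := by
        calc t = ∑ i : Fin t, 1 := by simp
        _ ≤ _ := Finset.sum_le_sum (fun i _ => hk i.succ)
      have he0L : e0 + 2 ≤ L := by
        have hk0 : 1 ≤ k 0 := hk 0
        omega
      obtain ⟨p', hp'1, hp'2, hSp'⟩ : ∃ p', e0 + 1 ≤ p' ∧ p' ≤ e0 + 2 ∧ S p' := by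
        rcases hP (e0 + 1) (by omega) with h | h
        · exact ⟨e0 + 1, le_rfl, by omega, h⟩
        · exact ⟨e0 + 2, by omega, le_rfl, h⟩
      obtain ⟨s', hs', hord⟩ := ih (fun i => k i.succ) (fun i => hk i.succ) p' hSp'
        (by show p' + 4*(∑ i : Fin t, k i.succ) + t ≤ L + 3; omega)
      refine ⟨Fin.cases s0 s', fun i => ?_, fun i j hij => ?_⟩
      · refine Fin.cases ?_ (fun i => ?_) i
        · simpa using ⟨hs0p, hSs0, hSe0, hs0L⟩
        · simp only [Fin.cases_succ]
          obtain ⟨h1, h2, h3, h4⟩ := hs' i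
          exact ⟨by omega, h2, h3, h4⟩
      · rcases Fin.eq_zero_or_eq_succ i with hi | ⟨i', hi⟩ <;>
          rcases Fin.eq_zero_or_eq_succ j with hj | ⟨j', hj⟩ <;> subst hi <;> subst hj
        · exact absurd hij (lt_irrefl _)
        · simp only [Fin.cases_zero, Fin.cases_succ]
          have := (hs' j').1
          omega
        · exact absurd hij (by simp)
        · simp only [Fin.cases_succ]
          refine hord i' j' ?_
          simpa [Fin.succ_lt_succ_iff] using hij
  
end comb2

section walk
variable {V : Type*}

lemma exists_walk_of_chain (H : SimpleGraph V) :
    ∀ (l : List V), l ≠ [] → l.Chain' H.Adj →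
      ∃ (u v : V) (w : H.Walk u v), w.support = l := by
  intro l
  induction l with
  | nil => simp
  | cons x xs ih =>
    intro _ hc
    cases xs with
    | nil => exact ⟨x, x, SimpleGraph.Walk.nil, by simp⟩
    | cons y ys =>
      obtain ⟨u, v, w, hw⟩ := ih (by simp) hc.tail
      have hu : y = u := by
        have h2 := SimpleGraph.Walk.support_eq_cons w
        rw [hw] at h2
        exact (List.cons_eq_cons.mp h2).1
      subst hu
      have hadj : H.Adj x y := hc.rel_head
      exact ⟨x, v, SimpleGraph.Walk.cons hadj w,
        by rw [SimpleGraph.Walk.support_cons, hw]⟩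

lemma chain'_rotate {R : V → V → Prop} {l : List V} (hc : l.Chain' R)
    (hwrap : ∀ x ∈ l.getLast?, ∀ y ∈ l.head?, R x y) (n : ℕ) :
    (l.rotate n).Chain' R := by
  rcases Nat.eq_zero_or_pos l.length with hl | hl
  · rw [List.length_eq_zero_iff] at hl; subst hl; simp [List.rotate_nil]; exact hc
  rw [← List.rotate_mod]
  have hn : n % l.length ≤ l.length := le_of_lt (Nat.mod_lt _ hl)
  rw [List.rotate_eq_drop_append_take hn]
  rcases Nat.eq_zero_or_pos (n % l.length) with h0 | h0
  · rw [h0]; simpa using hc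
  rcases eq_or_lt_of_le hn with he | hlt
  · rw [he]; simpa using hc
  refine List.IsChain.append (hc.drop _) (hc.take _) ?_
  intro a ha b hb
  apply hwrap
  · rw [List.getLast?_eq_getElem?] at ha ⊢
    rw [List.getElem?_drop] at ha
    rw [List.length_drop] at ha
    have : n % l.length + (l.length - n % l.length - 1) = l.length - 1 := by omega
    rwa [this] at ha
  · rcases List.exists_cons_of_ne_nil (List.ne_nil_of_length_pos hl) with ⟨a', l', rfl⟩
    rw [List.take_cons] at hb
    · simpa using hb
    · omega
end walk

section graph
open Finset
variable {V : Type*} [Fintype V] [DecidableEq V] (G : SimpleGraph V) [DecidableRel G.Adj]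

def degIn (B : Finset V) (v : V) : ℕ := (B.filter (G.Adj v)).card

def DD (A : Finset V) : ℕ := ∑ v ∈ A, degIn G A v

lemma degIn_mono {B A : Finset V} (h : B ⊆ A) (v : V) : degIn G B v ≤ degIn G A v :=
  Finset.card_le_card (Finset.filter_subset_filter _ h)

lemma degIn_le {A : Finset V} {v : V} (hv : v ∈ A) : degIn G A v ≤ A.card - 1 := by
  have h : A.filter (G.Adj v) ⊆ A.erase v := by
    intro x hx
    rw [Finset.mem_filter] at hx
    exact Finset.mem_erase.2 ⟨fun he => G.loopless.irrefl v (he ▸ hx.2), hx.1⟩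
  calc degIn G A v ≤ (A.erase v).card := Finset.card_le_card h
  _ = A.card - 1 := Finset.card_erase_of_mem hv

lemma DD_le (A : Finset V) : DD G A ≤ A.card * (A.card - 1) := by
  calc DD G A ≤ ∑ _v ∈ A, (A.card - 1) := Finset.sum_le_sum (fun v hv => degIn_le G hv)
  _ = A.card * (A.card - 1) := by rw [Finset.sum_const, smul_eq_mul]

lemma DD_erase {A : Finset V} {v : V} (hv : v ∈ A) :
    DD G A = DD G (A.erase v) + 2 * degIn G A v := by
  have hins : ∀ x, x ≠ v → degIn G A x = degIn G (A.erase v) x + (if G.Adj x v then 1 else 0) := by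
    intro x hx
    rw [degIn, degIn]
    conv_lhs => rw [← Finset.insert_erase hv]
    rw [Finset.filter_insert]
    by_cases hadj : G.Adj x v
    · rw [if_pos hadj, if_pos hadj, Finset.card_insert_of_notMem (by simp)]
    · rw [if_neg hadj, if_neg hadj, Nat.add_zero]
  have hdeg_erase : degIn G (A.erase v) v = degIn G A v := by
    rw [degIn, degIn, Finset.filter_erase, Finset.erase_eq_of_notMem]
    simp [G.loopless.irrefl v]
  have hsplit : DD G A = degIn G A v + ∑ x ∈ A.erase v, degIn G A x := by
    rw [DD, ← Finset.add_sum_erase _ _ hv]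
  rw [hsplit]
  have h2 : ∑ x ∈ A.erase v, degIn G A x
      = DD G (A.erase v) + ∑ x ∈ A.erase v, (if G.Adj x v then 1 else 0) := by
    rw [DD, ← Finset.sum_add_distrib]
    exact Finset.sum_congr rfl (fun x hx => hins x (Finset.ne_of_mem_erase hx))
  rw [h2]
  have h3 : ∑ x ∈ A.erase v, (if G.Adj x v then 1 else 0) = degIn G A v := by
    rw [← hdeg_erase, degIn, Finset.card_filter]
    exact Finset.sum_congr rfl (fun x _ => by simp [G.adj_comm])
  rw [h3]; ring

lemma DD_split {A A1 : Finset V} (h1 : A1 ⊆ A)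
    (hcross : ∀ x ∈ A1, ∀ y ∈ A \ A1, ¬ G.Adj x y) :
    DD G A = DD G A1 + DD G (A \ A1) := by
  have hAeq : A1 ∪ (A \ A1) = A := Finset.union_sdiff_of_subset h1
  have hdisj : Disjoint A1 (A \ A1) := Finset.disjoint_sdiff
  have hdeg : ∀ x ∈ A, degIn G A x = degIn G A1 x + degIn G (A \ A1) x := by
    intro x _
    rw [degIn, degIn, degIn]
    conv_lhs => rw [← hAeq]
    rw [Finset.filter_union,
      Finset.card_union_of_disjoint (Finset.disjoint_filter_filter hdisj)]
  have hzero1 : ∀ x ∈ A1, degIn G (A \ A1) x = 0 := by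
    intro x hx
    rw [degIn, Finset.card_eq_zero, Finset.filter_eq_empty_iff]
    exact fun y hy => hcross x hx y hy
  have hzero2 : ∀ x ∈ A \ A1, degIn G A1 x = 0 := by
    intro x hx
    rw [degIn, Finset.card_eq_zero, Finset.filter_eq_empty_iff]
    exact fun y hy hadj => hcross y hy x hx hadj.symm
  have e1 : ∑ x ∈ A1, degIn G A x = ∑ x ∈ A1, degIn G A1 x := by
    refine Finset.sum_congr rfl (fun x hx => ?_)
    rw [hdeg x (h1 hx), hzero1 x hx]; omega
  have e2 : ∑ x ∈ A \ A1, degIn G A x = ∑ x ∈ A \ A1, degIn G (A \ A1) x := by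
    refine Finset.sum_congr rfl (fun x hx => ?_)
    rw [hdeg x (Finset.mem_sdiff.1 hx).1, hzero2 x hx]; omega
  rw [DD, DD, DD]
  conv_lhs => rw [← hAeq]
  rw [Finset.sum_union hdisj, hAeq, e1, e2]

def Gr (B : Finset V) : SimpleGraph V where
  Adj x y := G.Adj x y ∧ x ∈ B ∧ y ∈ B
  symm := ⟨by rintro x y ⟨h, hx, hy⟩; exact ⟨h.symm, hy, hx⟩⟩
  loopless := ⟨by rintro x ⟨h, _⟩; exact G.loopless.irrefl x h⟩

lemma clean (c : ℕ) : ∀ (n : ℕ) (A : Finset V), A.card ≤ n → c * A.card < DD G A →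
    ∃ B, B ⊆ A ∧ (c * B.card < DD G B) ∧ (∀ v ∈ B, c < 2 * degIn G B v) ∧
      ∀ x ∈ B, ∀ y ∈ B, (Gr G B).Reachable x y := by
  classical
  intro n
  induction n with
  | zero =>
    intro A hA hdense
    have hc : A.card = 0 := Nat.le_antisymm hA (Nat.zero_le _)
    rw [Finset.card_eq_zero] at hc
    subst hc
    simp [DD] at hdense
  | succ n ih =>
    intro A hA hdense
    by_cases h1 : ∃ v ∈ A, 2 * degIn G A v ≤ c
    · obtain ⟨v, hv, hdeg⟩ := h1
      have herase := DD_erase G hv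
      have hcard : (A.erase v).card = A.card - 1 := Finset.card_erase_of_mem hv
      have hApos : 1 ≤ A.card := Finset.card_pos.2 ⟨v, hv⟩
      obtain ⟨m, hm⟩ : ∃ m, A.card = m + 1 := ⟨A.card - 1, by omega⟩
      have hmul : c * (m + 1) = c * m + c := by ring
      rw [hm] at hdense
      obtain ⟨B, hB1, hB2, hB3, hB4⟩ := ih (A.erase v) (by omega)
        (by rw [hcard, hm]; simp only [Nat.add_sub_cancel]; omega)
      exact ⟨B, hB1.trans (Finset.erase_subset v A), hB2, hB3, hB4⟩
    · by_cases h2 : ∃ A1, A1 ⊆ A ∧ A1.Nonempty ∧ A1 ≠ A ∧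
          ∀ x ∈ A1, ∀ y ∈ A \ A1, ¬ G.Adj x y
      · obtain ⟨A1, hsub, hne, hneq, hcross⟩ := h2
        have hsplit := DD_split G hsub hcross
        have hcards : A1.card + (A \ A1).card = A.card := by
          rw [Finset.card_sdiff_of_subset hsub]
          have := Finset.card_le_card hsub
          omega
        have hlt1 : A1.card < A.card :=
          Finset.card_lt_card (Finset.ssubset_iff_subset_ne.2 ⟨hsub, hneq⟩)
        have hlt2 : (A \ A1).card < A.card := by
          obtain ⟨x, hx⟩ := hne
          have := Finset.card_pos.2 ⟨x, hx⟩
          omega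
        have : c * A1.card < DD G A1 ∨ c * (A \ A1).card < DD G (A \ A1) := by
          by_contra hcon
          push_neg at hcon
          have : c * A.card = c * A1.card + c * (A \ A1).card := by
            rw [← hcards]; ring
          omega
        rcases this with hd | hd
        · obtain ⟨B, hB1, hB2, hB3, hB4⟩ := ih A1 (by omega) hd
          exact ⟨B, hB1.trans hsub, hB2, hB3, hB4⟩
        · obtain ⟨B, hB1, hB2, hB3, hB4⟩ := ih (A \ A1) (by omega) hd
          exact ⟨B, hB1.trans (Finset.sdiff_subset), hB2, hB3, hB4⟩
      · push_neg at h1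
        push_neg at h2
        refine ⟨A, le_refl A, hdense, h1, ?_⟩
        intro x hx y hy
        by_contra hreach
        set R := A.filter (fun z => (Gr G A).Reachable x z) with hR
        have hxR : x ∈ R := Finset.mem_filter.2 ⟨hx, SimpleGraph.Reachable.refl x⟩
        have hRA : R ⊆ A := Finset.filter_subset _ _
        have hRne : R ≠ A := by
          intro hRA'
          exact hreach (Finset.mem_filter.1 (hRA' ▸ hy : y ∈ R)).2
        obtain ⟨u, hu, w, hw, hadj⟩ := h2 R hRA ⟨x, hxR⟩ hRne
        have hwA : w ∈ A := (Finset.mem_sdiff.1 hw).1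
        have hreachw : (Gr G A).Reachable x w :=
          (Finset.mem_filter.1 hu).2.trans
            (SimpleGraph.Adj.reachable ⟨hadj, hRA hu, hwA⟩)
        exact (Finset.mem_sdiff.1 hw).2 (Finset.mem_filter.2 ⟨hwA, hreachw⟩)

end graph
section longlist
open Finset List
variable {V : Type*} [Fintype V] [DecidableEq V] (G : SimpleGraph V) [DecidableRel G.Adj]

lemma exists_long_list (c : ℕ) (B : Finset V) (hB : c * B.card < DD G B)
    (hdeg : ∀ v ∈ B, c < 2 * degIn G B v)
    (hconn : ∀ x ∈ B, ∀ y ∈ B, (Gr G B).Reachable x y) :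
    ∃ xs : List V, xs.Chain' G.Adj ∧ xs.Nodup ∧ c + 2 ≤ xs.length := by
  classical
  have hBne : B.Nonempty := by
    rcases B.eq_empty_or_nonempty with rfl | h
    · simp [DD] at hB
    · exact h
  set P : ℕ → Prop := fun m => ∃ xs : List V,
    xs.Chain' G.Adj ∧ xs.Nodup ∧ (∀ x ∈ xs, x ∈ B) ∧ xs.length = m with hPdef
  have hbound : ∀ xs : List V, xs.Nodup → (∀ x ∈ xs, x ∈ B) → xs.length ≤ B.card := by
    intro xs hnd hmem
    have hsub : xs.toFinset ⊆ B := fun x hx => hmem x (List.mem_toFinset.1 hx)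
    calc xs.length = xs.toFinset.card := (List.toFinset_card_of_nodup hnd).symm
    _ ≤ B.card := Finset.card_le_card hsub
  obtain ⟨b, hb⟩ := hBne
  have hP1 : P 1 := ⟨[b], List.isChain_singleton b, by simp, by simpa using hb, rfl⟩
  have hcard1 : 1 ≤ B.card := Finset.card_pos.2 ⟨b, hb⟩
  set M := Nat.findGreatest P B.card with hM
  have hPM : P M := Nat.findGreatest_spec hcard1 hP1
  have hmax : ∀ ys : List V, ys.Chain' G.Adj → ys.Nodup → (∀ x ∈ ys, x ∈ B) →
      ys.length ≤ M := by
    intro ys h1 h2 h3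
    exact Nat.le_findGreatest (hbound ys h2 h3) ⟨ys, h1, h2, h3, rfl⟩
  obtain ⟨xs, hchain, hnodup, hmem, hlen⟩ := hPM
  have hM1 : 1 ≤ M := Nat.le_findGreatest hcard1 hP1
  have hxs_ne : xs ≠ [] := by
    intro h; rw [h] at hlen; simp at hlen; omega
  set d := xs.head hxs_ne with hd
  set f : ℕ → V := fun i => xs.getD i d with hf
  set l := M - 1 with hl
  have hlength : xs.length = l + 1 := by omega
  have hfget : ∀ i, i < l + 1 → xs[i]? = some (f i) := by
    intro i hi
    rw [hf]
    simp only []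
    rw [List.getD_eq_getElem _ _ (by omega), List.getElem?_eq_getElem (by omega)]
  have hfmem : ∀ i, i < l + 1 → f i ∈ xs := by
    intro i hi
    obtain ⟨h', he⟩ := List.getElem?_eq_some_iff.1 (hfget i hi)
    exact he ▸ List.getElem_mem h'
  have hx0xs : f 0 ∈ xs := hfmem 0 (by omega)
  have hxlxs : f l ∈ xs := hfmem l (by omega)
  have hhead? : xs.head? = some (f 0) := by
    rw [List.head?_eq_getElem?, hfget 0 (by omega)]
  have hlast? : xs.getLast? = some (f l) := by
    rw [List.getLast?_eq_getElem?, hlength]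
    simpa using hfget l (by omega)
  -- maximality: cannot prepend / append
  have hprep : ∀ y ∈ B, G.Adj y (f 0) → y ∈ xs := by
    intro y hyB hyadj
    by_contra hymem
    have hchain' : (y :: xs).Chain' G.Adj := by
      refine List.isChain_cons.2 ⟨?_, hchain⟩
      intro z hz
      rw [hhead?] at hz
      cases hz
      exact hyadj
    have := hmax (y :: xs) hchain' (List.nodup_cons.2 ⟨hymem, hnodup⟩)
      (by intro x hx; rcases List.mem_cons.1 hx with rfl | hx; exact hyB; exact hmem x hx)
    simp only [List.length_cons, hlen] at this
    omega
  have happ : ∀ y ∈ B, G.Adj (f l) y → y ∈ xs := by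
    intro y hyB hyadj
    by_contra hymem
    have hchain' : (xs ++ [y]).Chain' G.Adj := by
      refine hchain.append (List.isChain_singleton y) ?_
      intro a ha bb hbb
      rw [hlast?] at ha
      cases ha
      cases hbb
      exact hyadj
    have hnd : (xs ++ [y]).Nodup := by
      rw [List.nodup_append]
      exact ⟨hnodup, List.nodup_singleton y, by simpa using fun a ha (hay : a = y) => hymem (hay ▸ ha)⟩
    have := hmax (xs ++ [y]) hchain' hnd
      (by intro x hx; rcases List.mem_append.1 hx with hx | hx;
          exact hmem x hx; rw [List.mem_singleton.1 hx]; exact hyB)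
    simp only [List.length_append, List.length_singleton, hlen] at this
    omega
  -- index sets
  set Afin := (Finset.range l).filter (fun i => G.Adj (f 0) (f (i+1))) with hAfin
  set Bfin := (Finset.range l).filter (fun i => G.Adj (f l) (f i)) with hBfin
  have hidx_lt : ∀ y ∈ xs, xs.idxOf y < l + 1 := by
    intro y hy
    have := List.idxOf_lt_length_iff.2 hy
    omega
  have hidx_val : ∀ y ∈ xs, f (xs.idxOf y) = y := by
    intro y hy
    have h1 := List.getElem?_idxOf hy
    have h2 := hfget (xs.idxOf y) (hidx_lt y hy)
    rw [h1] at h2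
    exact (Option.some_injective _ h2.symm)
  have hAcard : degIn G B (f 0) ≤ Afin.card := by
    rw [degIn]
    refine Finset.card_le_card_of_injOn (fun y => xs.idxOf y - 1) ?_ ?_
    · intro y hy
      obtain ⟨hyB, hyadj⟩ := Finset.mem_filter.1 hy
      have hyxs : y ∈ xs := hprep y hyB hyadj.symm
      have hlt := hidx_lt y hyxs
      have hne0 : xs.idxOf y ≠ 0 := by
        intro h0
        have := hidx_val y hyxs
        rw [h0] at this
        rw [this] at hyadj
        exact G.loopless.irrefl _ hyadj
      refine Finset.mem_filter.2 ⟨Finset.mem_range.2 (by dsimp only; omega), ?_⟩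
      dsimp only
      have heq : (xs.idxOf y - 1) + 1 = xs.idxOf y := by omega
      rw [heq, hidx_val y hyxs]
      exact hyadj
    · intro y1 h1 y2 h2 heq
      obtain ⟨h1B, h1adj⟩ := Finset.mem_filter.1 h1
      obtain ⟨h2B, h2adj⟩ := Finset.mem_filter.1 h2
      have h1xs : y1 ∈ xs := hprep y1 h1B h1adj.symm
      have h2xs : y2 ∈ xs := hprep y2 h2B h2adj.symm
      have hne1 : xs.idxOf y1 ≠ 0 := by
        intro h0
        have := hidx_val y1 h1xs; rw [h0] at this; rw [this] at h1adj
        exact G.loopless.irrefl _ h1adj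
      have hne2 : xs.idxOf y2 ≠ 0 := by
        intro h0
        have := hidx_val y2 h2xs; rw [h0] at this; rw [this] at h2adj
        exact G.loopless.irrefl _ h2adj
      dsimp only at heq
      have : xs.idxOf y1 = xs.idxOf y2 := by omega
      exact (List.idxOf_inj h1xs).1 this
  have hBcard : degIn G B (f l) ≤ Bfin.card := by
    rw [degIn]
    refine Finset.card_le_card_of_injOn (fun y => xs.idxOf y) ?_ ?_
    · intro y hy
      obtain ⟨hyB, hyadj⟩ := Finset.mem_filter.1 hy
      have hyxs : y ∈ xs := happ y hyB hyadj
      have hlt := hidx_lt y hyxs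
      have hnel : xs.idxOf y ≠ l := by
        intro h0
        have := hidx_val y hyxs
        rw [h0] at this
        rw [this] at hyadj
        exact G.loopless.irrefl _ hyadj
      refine Finset.mem_filter.2 ⟨Finset.mem_range.2 (by dsimp only; omega), ?_⟩
      dsimp only
      rw [hidx_val y hyxs]
      exact hyadj
    · intro y1 h1 y2 h2 heq
      obtain ⟨h1B, h1adj⟩ := Finset.mem_filter.1 h1
      obtain ⟨h2B, h2adj⟩ := Finset.mem_filter.1 h2
      exact (List.idxOf_inj (happ y1 h1B h1adj)).1 heq
  refine ⟨xs, hchain, hnodup, ?_⟩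
  rw [hlen]
  by_cases hxB : ∀ y ∈ B, y ∈ xs
  · -- B is exactly the list : dense small graph
    have hMB : B.card = M := by
      have h1 : B.card ≤ xs.length := by
        have hsub : B ⊆ xs.toFinset := fun x hx => List.mem_toFinset.2 (hxB x hx)
        calc B.card ≤ xs.toFinset.card := Finset.card_le_card hsub
        _ = xs.length := List.toFinset_card_of_nodup hnodup
      have h2 := hbound xs hnodup hmem
      omega
    have hDDle := DD_le G B
    rw [hMB] at hDDle hB
    by_contra hMc
    push_neg at hMc
    have hmle : M * (M - 1) ≤ M * c := Nat.mul_le_mul_left _ (by omega)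
    have hcomm : c * M = M * c := Nat.mul_comm c M
    omega
  · push_neg at hxB
    obtain ⟨y', hy'B, hy'xs⟩ := hxB
    -- find a cross edge from outside the list into the list
    have hcrossw : ∀ {a bb : V} (w : (Gr G B).Walk a bb), a ∉ xs → bb ∈ xs →
        ∃ u z, G.Adj u z ∧ u ∈ B ∧ u ∉ xs ∧ z ∈ xs := by
      intro a bb w
      induction w with
      | nil => intro h1 h2; exact absurd h2 h1
      | @cons u v w h p ih =>
        intro h1 h2
        by_cases hm : v ∈ xs
        · exact ⟨u, v, h.1, h.2.1, h1, hm⟩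
        · exact ih hm h2
    obtain ⟨w⟩ := hconn y' hy'B (f 0) (hmem _ hx0xs)
    obtain ⟨y, z, hyz, hyB, hyxs, hzxs⟩ := hcrossw w hy'xs hx0xs
    by_cases hdisj : (Afin ∩ Bfin).Nonempty
    · -- rotation: build a longer list, contradiction
      exfalso
      obtain ⟨i, hi⟩ := hdisj
      obtain ⟨hiA, hiB⟩ := Finset.mem_inter.1 hi
      obtain ⟨hirange, hi1⟩ := Finset.mem_filter.1 hiA
      obtain ⟨_, hi2⟩ := Finset.mem_filter.1 hiB
      have hil : i < l := Finset.mem_range.1 hirange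
      set ys := xs.take (i+1) ++ (xs.drop (i+1)).reverse with hys
      have htake_ne : xs.take (i+1) ≠ [] := by
        have : (xs.take (i+1)).length = i + 1 := by
          rw [List.length_take, hlength]; omega
        intro h; rw [h] at this; simp at this
      have hdrop_ne : xs.drop (i+1) ≠ [] := by
        have : (xs.drop (i+1)).length = l - i := by
          rw [List.length_drop, hlength]; omega
        intro h; rw [h] at this; simp at this; omega
      have htake_last : (xs.take (i+1)).getLast? = some (f i) := by
        rw [List.getLast?_eq_getElem?, List.length_take, hlength]
        have hmin : min (i+1) (l+1) = i + 1 := by omega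
        rw [hmin]
        simp only [Nat.add_sub_cancel]
        rw [List.getElem?_take_of_lt (by omega)]
        exact hfget i (by omega)
      have hdrop_head : (xs.drop (i+1)).head? = some (f (i+1)) := by
        rw [List.head?_eq_getElem?, List.getElem?_drop]
        simpa using hfget (i+1) (by omega)
      have hdrop_last : (xs.drop (i+1)).getLast? = some (f l) := by
        rw [List.getLast?_eq_getElem?, List.getElem?_drop, List.length_drop, hlength]
        have : i + 1 + (l + 1 - (i+1) - 1) = l := by omega
        rw [this]
        exact hfget l (by omega)
      have hperm : ys.Perm xs := by
        refine List.Perm.trans (List.Perm.append_left _ (List.reverse_perm _)) ?_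
        rw [List.take_append_drop]
      have hychain : ys.Chain' G.Adj := by
        refine List.IsChain.append (hchain.take _) ?_ ?_
        · exact (List.isChain_reverse).2 ((hchain.drop _).imp (fun a b h => h.symm))
        · intro a ha bb hbb
          rw [htake_last] at ha
          rw [List.head?_reverse, hdrop_last] at hbb
          cases ha; cases hbb
          exact hi2.symm
      have hwrap : ∀ a ∈ ys.getLast?, ∀ bb ∈ ys.head?, G.Adj a bb := by
        intro a ha bb hbb
        rw [hys, List.getLast?_append_of_ne_nil _ (by simpa using hdrop_ne),
          List.getLast?_reverse, hdrop_head] at ha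
        rw [hys, List.head?_append_of_ne_nil _ htake_ne, List.head?_eq_getElem?,
          List.getElem?_take_of_lt (by omega), hfget 0 (by omega)] at hbb
        cases ha; cases hbb
        exact hi1.symm
      have hzys : z ∈ ys := hperm.mem_iff.2 hzxs
      set j := ys.idxOf z with hj
      have hyslen : ys.length = l + 1 := by rw [hperm.length_eq, hlength]
      have hjlt : j < l + 1 := by rw [← hyslen]; exact List.idxOf_lt_length_iff.2 hzys
      set zs := ys.rotate j with hzs
      have hzchain : zs.Chain' G.Adj := chain'_rotate hychain hwrap j
      have hzhead : zs.head? = some z := by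
        rw [hzs, List.rotate_eq_drop_append_take (by omega),
          List.head?_append_of_ne_nil _ (by
            intro h
            have : (ys.drop j).length = 0 := by rw [h]; rfl
            rw [List.length_drop, hyslen] at this
            omega),
          List.head?_eq_getElem?, List.getElem?_drop]
        simpa using List.getElem?_idxOf hzys
      have hws_chain : (y :: zs).Chain' G.Adj := by
        refine List.isChain_cons.2 ⟨?_, hzchain⟩
        intro b hbb
        rw [hzhead] at hbb
        cases hbb
        exact hyz
      have hzperm : zs.Perm xs := (List.rotate_perm ys j).trans hperm
      have hws_nodup : (y :: zs).Nodup :=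
        List.nodup_cons.2 ⟨fun h => hyxs (hzperm.mem_iff.1 h), hzperm.nodup_iff.2 hnodup⟩
      have hws_mem : ∀ x ∈ y :: zs, x ∈ B := by
        intro x hx
        rcases List.mem_cons.1 hx with rfl | hx
        · exact hyB
        · exact hmem x (hzperm.mem_iff.1 hx)
      have := hmax (y :: zs) hws_chain hws_nodup hws_mem
      rw [List.length_cons, hzperm.length_eq, hlen] at this
      omega
    · -- disjoint neighbourhoods : the list is long
      have hABle : Afin.card + Bfin.card ≤ l := by
        have hd : Disjoint Afin Bfin := Finset.disjoint_iff_inter_eq_empty.2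
          (Finset.not_nonempty_iff_eq_empty.1 hdisj)
        rw [← Finset.card_union_of_disjoint hd]
        calc (Afin ∪ Bfin).card ≤ (Finset.range l).card :=
          Finset.card_le_card (Finset.union_subset (Finset.filter_subset _ _)
            (Finset.filter_subset _ _))
        _ = l := Finset.card_range l
      have h1 := hdeg (f 0) (hmem _ hx0xs)
      have h2 := hdeg (f l) (hmem _ hxlxs)
      omega

end longlist

section trim
variable {V : Type*} (G : SimpleGraph V) (U : Set V)

lemma trimHead (hGU : ∀ x y, G.Adj x y → x ∈ U ∨ y ∈ U) :
    ∀ xs : List V, xs.Chain' G.Adj → 2 ≤ xs.length →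
      ∃ ys : List V, (ys = xs ∨ ys = xs.tail) ∧ ∀ z ∈ ys.head?, z ∈ U := by
  intro xs hc hlen
  match xs, hc, hlen with
  | a :: b :: r, hc, _ =>
    by_cases ha : a ∈ U
    · refine ⟨a :: b :: r, Or.inl rfl, ?_⟩
      intro z hz
      simp only [List.head?_cons, Option.mem_def, Option.some.injEq] at hz
      subst hz; exact ha
    · have hb : b ∈ U := by
        rcases hGU a b hc.rel_head with h | h
        · exact absurd h ha
        · exact h
      refine ⟨b :: r, Or.inr rfl, ?_⟩
      intro z hz
      simp only [List.head?_cons, Option.mem_def, Option.some.injEq] at hz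
      subst hz; exact hb

lemma getLast?_tail' {l : List V} (h : 2 ≤ l.length) : l.tail.getLast? = l.getLast? := by
  rw [← List.drop_one, List.getLast?_eq_getElem?, List.getLast?_eq_getElem?,
    List.getElem?_drop, List.length_drop]
  congr 1
  omega

lemma trimBoth (hGU : ∀ x y, G.Adj x y → x ∈ U ∨ y ∈ U) (c : ℕ) (hc2 : 2 ≤ c)
    (xs : List V) (hc : xs.Chain' G.Adj) (hnd : xs.Nodup) (hlen : c + 2 ≤ xs.length) :
    ∃ zs : List V, zs.Chain' G.Adj ∧ zs.Nodup ∧ c ≤ zs.length ∧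
      (∀ z ∈ zs.head?, z ∈ U) ∧ (∀ z ∈ zs.getLast?, z ∈ U) := by
  obtain ⟨ys, hys, hysU⟩ := trimHead G U hGU xs hc (by omega)
  have hyschain : ys.Chain' G.Adj := by
    rcases hys with rfl | rfl
    · exact hc
    · exact hc.tail
  have hysnodup : ys.Nodup := by
    rcases hys with rfl | rfl
    · exact hnd
    · exact hnd.sublist (List.tail_sublist xs)
  have hyslen : c + 1 ≤ ys.length := by
    rcases hys with rfl | rfl
    · omega
    · rw [List.length_tail]; omega
  obtain ⟨ws, hws, hwsU⟩ := trimHead G U hGU ys.reverse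
    ((List.isChain_reverse).2 (hyschain.imp (fun a b h => h.symm)))
    (by rw [List.length_reverse]; omega)
  refine ⟨ws.reverse, ?_, ?_, ?_, ?_, ?_⟩
  · rcases hws with rfl | rfl
    · simpa using hyschain
    · refine (List.isChain_reverse).2 ?_
      exact (((List.isChain_reverse).2 (hyschain.imp (fun a b h => h.symm))).tail).imp
        (fun a b h => h.symm)
  · refine (List.nodup_reverse).2 ?_
    rcases hws with rfl | rfl
    · exact (List.nodup_reverse).2 hysnodup
    · exact ((List.nodup_reverse).2 hysnodup).sublist (List.tail_sublist _)
  · rcases hws with rfl | rfl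
    · simp; omega
    · rw [List.length_reverse, List.length_tail, List.length_reverse]; omega
  · -- head of ws.reverse = getLast of ws
    intro z hz
    rw [List.head?_reverse] at hz
    rcases hws with rfl | rfl
    · rw [List.getLast?_reverse] at hz
      exact hysU z hz
    · rw [getLast?_tail' (by rw [List.length_reverse]; omega), List.getLast?_reverse] at hz
      exact hysU z hz
  · intro z hz
    rw [List.getLast?_reverse] at hz
    exact hwsU z hz

end trim
section count
open Finset
variable {V : Type*} [Fintype V] [DecidableEq V]

lemma count_eq (H : SimpleGraph V) (U : Set V) (G : SimpleGraph V) [DecidableRel G.Adj]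
    (hG : ∀ x y, G.Adj x y ↔ (H.Adj x y ∧ (x ∈ U ∨ y ∈ U))) :
    2 * (eW H U + eB H U Uᶜ) = DD G Finset.univ := by
  classical
  have hdeg : DD G Finset.univ = ∑ v, G.degree v := by
    refine Finset.sum_congr rfl (fun v _ => ?_)
    rw [degIn, SimpleGraph.degree, SimpleGraph.neighborFinset_eq_filter]
  have hsum : ∑ v, G.degree v = 2 * G.edgeFinset.card :=
    SimpleGraph.sum_degrees_eq_twice_card_edges G
  rw [hdeg, hsum]
  congr 1
  -- edgeFinset.card = eW + eB
  set S1 : Set (Sym2 V) := {e ∈ H.edgeSet | ∀ v ∈ e, v ∈ U} with hS1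
  set S2 : Set (Sym2 V) := {e ∈ H.edgeSet | ∃ u ∈ U, ∃ w ∈ Uᶜ, e = s(u, w)} with hS2
  have hunion : G.edgeSet = S1 ∪ S2 := by
    ext e
    induction e with
    | _ x y =>
      simp only [SimpleGraph.mem_edgeSet, hG, Set.mem_union, hS1, hS2, Set.mem_setOf_eq,
        SimpleGraph.mem_edgeSet, Sym2.mem_iff, Sym2.eq, Sym2.rel_iff', Prod.mk.injEq,
        Prod.swap_prod_mk, Set.mem_compl_iff]
      constructor
      · rintro ⟨hadj, hU⟩
        by_cases hx : x ∈ U <;> by_cases hy : y ∈ U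
        · exact Or.inl ⟨hadj, fun v hv => by rcases hv with rfl | rfl; exacts [hx, hy]⟩
        · exact Or.inr ⟨hadj, x, hx, y, hy, Or.inl ⟨rfl, rfl⟩⟩
        · exact Or.inr ⟨hadj, y, hy, x, hx, Or.inr ⟨rfl, rfl⟩⟩
        · tauto
      · rintro (⟨hadj, hU⟩ | ⟨hadj, u, hu, w, hw, (⟨rfl, rfl⟩ | ⟨rfl, rfl⟩)⟩)
        · exact ⟨hadj, Or.inl (hU x (Or.inl rfl))⟩
        · exact ⟨hadj, Or.inl hu⟩
        · exact ⟨hadj, Or.inr hu⟩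
  have hdisj : Disjoint S1 S2 := by
    rw [Set.disjoint_left]
    rintro e he1 he2
    induction e with
    | _ x y =>
      rw [hS1, Set.mem_setOf_eq] at he1
      rw [hS2, Set.mem_setOf_eq] at he2
      obtain ⟨_, hall⟩ := he1
      obtain ⟨_, u, hu, w, hw, heq⟩ := he2
      exact hw (hall w (heq ▸ Sym2.mem_mk_right u w))
  have hcard : G.edgeFinset.card = G.edgeSet.ncard := by
    rw [Set.ncard_eq_toFinset_card']
    congr 1
  rw [hcard, hunion, Set.ncard_union_eq hdisj (Set.toFinite _) (Set.toFinite _)]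
  rfl

end count

/-- let `Ĥ` be a graph on `n` vertices with vertex partition
`U ⊔ Uᶜ`, let `k' i ≥ 1` and `κ = ∑ k' i`. If
`e(U) + e(U, W) > (4κ + t - 2)·n/2`, then `Ĥ` contains `t` pairwise
vertex-disjoint paths, the `i`-th on `2 k' i + 1` vertices, with all
endpoints in `U`. -/
theorem stmt4 {V : Type*} [Fintype V] (H : SimpleGraph V) (U : Set V)
    (t : ℕ) (ht : 1 ≤ t) (k' : Fin t → ℕ) (hk' : ∀ i, 1 ≤ k' i)
    (κ : ℕ) (hκ : κ = ∑ i, k' i)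
    (h : ((4 * κ + t : ℝ) - 2) * (Fintype.card V) / 2 < (eW H U : ℝ) + eB H U Uᶜ) :
    ∃ (u v : Fin t → V) (p : ∀ i, H.Walk (u i) (v i)),
      (∀ i, u i ∈ U ∧ v i ∈ U ∧ (p i).IsPath ∧ (p i).length = 2 * k' i) ∧
      ∀ i j, i ≠ j → List.Disjoint (p i).support (p j).support := by
  classical
  have hκt : t ≤ κ := by
    rw [hκ]
    calc t = ∑ _i : Fin t, 1 := by simp
    _ ≤ ∑ i, k' i := Finset.sum_le_sum (fun i _ => hk' i)
  let G : SimpleGraph V :=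
    { Adj := fun x y => H.Adj x y ∧ (x ∈ U ∨ y ∈ U),
      symm := ⟨fun x y hxy => ⟨hxy.1.symm, hxy.2.symm⟩⟩,
      loopless := ⟨fun x hx => H.loopless.irrefl x hx.1⟩ }
  letI : DecidableRel G.Adj := fun a b => Classical.propDecidable _
  letI : DecidableEq V := Classical.decEq V
  have hGU : ∀ x y, G.Adj x y → x ∈ U ∨ y ∈ U := fun x y hxy => hxy.2
  -- translate the real hypothesis into a natural number count
  have h2le : (2:ℕ) ≤ 4*κ+t := by omega
  have hre : ((4*κ+t:ℝ) - 2) * (Fintype.card V) < 2 * ((eW H U:ℝ) + (eB H U Uᶜ:ℝ)) := by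
    have h2 := (div_lt_iff₀ (by norm_num : (0:ℝ) < 2)).1 h
    push_cast at h2 ⊢
    linarith
  have hnat : (4*κ+t-2) * (Fintype.card V) < 2 * (eW H U + eB H U Uᶜ) := by
    rw [← Nat.cast_lt (α := ℝ)]
    push_cast [Nat.cast_sub h2le]
    push_cast at hre
    linarith
  have hcn : (4*κ+t-2) * (Finset.univ : Finset V).card < DD G Finset.univ := by
    rw [Finset.card_univ, ← count_eq H U G (fun x y => Iff.rfl)]
    exact hnat
  obtain ⟨B, hBsub, hBdense, hBdeg, hBconn⟩ :=
    clean G (4*κ+t-2) (Fintype.card V) Finset.univ (le_of_eq Finset.card_univ) hcn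
  obtain ⟨xs, hchain, hnodup, hxslen⟩ := exists_long_list G (4*κ+t-2) B hBdense hBdeg hBconn
  obtain ⟨zs, hzchain, hznodup, hzlen, hzhead, hzlast⟩ :=
    trimBoth G U hGU (4*κ+t-2) (by omega) xs hchain hnodup hxslen
  set L := zs.length - 1 with hLdef
  set S : ℕ → Prop := fun j => ∃ x, zs[j]? = some x ∧ x ∈ U with hSdef
  have hzs_ne : zs ≠ [] := by
    intro hz
    rw [hz] at hzlen
    simp at hzlen
    omega
  have hzpos : 1 ≤ zs.length := List.length_pos_iff.2 hzs_ne
  have hS0 : S 0 := by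
    cases hh : zs.head? with
    | none => rw [List.head?_eq_none_iff] at hh; exact absurd hh hzs_ne
    | some a =>
      refine ⟨a, ?_, hzhead a (by rw [hh]; rfl)⟩
      rw [← List.head?_eq_getElem?, hh]
  have hSL : S L := by
    cases hh : zs.getLast? with
    | none => rw [List.getLast?_eq_none_iff] at hh; exact absurd hh hzs_ne
    | some a =>
      refine ⟨a, ?_, hzlast a (by rw [hh]; rfl)⟩
      rw [hLdef, ← List.getLast?_eq_getElem?, hh]
  have hP : ∀ j, j + 1 ≤ L → S j ∨ S (j+1) := by
    intro j hj
    have hjlt : j + 1 < zs.length := by omega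
    have hadj := List.isChain_iff_getElem.1 hzchain j (by omega)
    rcases hadj.2 with hu | hu
    · exact Or.inl ⟨zs[j], List.getElem?_eq_getElem (by omega), hu⟩
    · exact Or.inr ⟨zs[j+1], List.getElem?_eq_getElem (by omega), hu⟩
  have hbound : 0 + 4*(∑ i, k' i) + t ≤ L + 3 := by
    rw [← hκ]
    omega
  obtain ⟨s, hs, hord⟩ := lemmaEXT hP hSL t k' hk' 0 hS0 hbound
  have hwget : ∀ (i : Fin t) (j : ℕ), j < 2 * k' i + 1 →
      ((zs.drop (s i)).take (2 * k' i + 1))[j]? = zs[s i + j]? := by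
    intro i j hj
    rw [List.getElem?_take_of_lt hj, List.getElem?_drop]
  have hwlen : ∀ i : Fin t, ((zs.drop (s i)).take (2 * k' i + 1)).length = 2 * k' i + 1 := by
    intro i
    rw [List.length_take, List.length_drop]
    have := (hs i).2.2.2
    omega
  have hsupp_head : ∀ {a b : V} (q : H.Walk a b), q.support.head? = some a := by
    intro a b q
    rw [q.support_eq_cons]
    rfl
  have hsupp_last : ∀ {a b : V} (q : H.Walk a b), q.support.getLast? = some b := by
    intro a b q
    rw [← List.head?_reverse, ← SimpleGraph.Walk.support_reverse]
    exact hsupp_head q.reverse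
  have hexists : ∀ i : Fin t, ∃ (a b : V) (q : H.Walk a b),
      q.support = (zs.drop (s i)).take (2 * k' i + 1) := by
    intro i
    refine exists_walk_of_chain H _ ?_ ?_
    · intro hnil
      have := hwlen i
      rw [hnil] at this
      simp at this
    · exact ((hzchain.drop _).take _).imp (fun a b hab => hab.1)
  choose u v p hp using hexists
  refine ⟨u, v, p, fun i => ⟨?_, ?_, ?_, ?_⟩, fun i j hij => ?_⟩
  · -- u i ∈ U
    obtain ⟨x1, hx1, hx1U⟩ := (hs i).2.1
    have h1 : ((zs.drop (s i)).take (2 * k' i + 1)).head? = some (u i) := by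
      rw [← hp i]
      exact hsupp_head (p i)
    have h2 : zs[s i]? = some (u i) := by
      have h0 := hwget i 0 (by omega)
      simp only [Nat.add_zero] at h0
      rw [← h0, ← List.head?_eq_getElem?]
      exact h1
    rw [hx1] at h2
    injection h2 with h3
    rw [← h3]
    exact hx1U
  · -- v i ∈ U
    obtain ⟨x2, hx2, hx2U⟩ := (hs i).2.2.1
    have h1 : ((zs.drop (s i)).take (2 * k' i + 1)).getLast? = some (v i) := by
      rw [← hp i]
      exact hsupp_last (p i)
    have h2 : zs[s i + 2 * k' i]? = some (v i) := by
      rw [← hwget i (2 * k' i) (by omega)]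
      rw [List.getLast?_eq_getElem?, hwlen i] at h1
      simpa using h1
    rw [hx2] at h2
    injection h2 with h3
    rw [← h3]
    exact hx2U
  · -- path
    rw [SimpleGraph.Walk.isPath_def, hp i]
    exact hznodup.sublist ((List.take_sublist _ _).trans (List.drop_sublist _ _))
  · -- length
    have hl := SimpleGraph.Walk.length_support (p i)
    rw [hp i, hwlen i] at hl
    omega
  · -- disjoint
    intro a ha hb
    rw [hp i] at ha
    rw [hp j] at hb
    obtain ⟨ni, hni⟩ := List.mem_iff_getElem?.1 ha
    obtain ⟨nj, hnj⟩ := List.mem_iff_getElem?.1 hb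
    have hni_lt : ni < 2 * k' i + 1 := by
      obtain ⟨h', _⟩ := List.getElem?_eq_some_iff.1 hni
      rwa [hwlen i] at h'
    have hnj_lt : nj < 2 * k' j + 1 := by
      obtain ⟨h', _⟩ := List.getElem?_eq_some_iff.1 hnj
      rwa [hwlen j] at h'
    have hzi : zs[s i + ni]? = some a := by rw [← hwget i ni hni_lt]; exact hni
    have hzj : zs[s j + nj]? = some a := by rw [← hwget j nj hnj_lt]; exact hnj
    have hlt : s i + ni < zs.length := (List.getElem?_eq_some_iff.1 hzi).1
    have heq : s i + ni = s j + nj :=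
      (List.getElem?_inj hlt hznodup).1 (hzi.trans hzj.symm)
    rcases lt_or_gt_of_ne hij with hlt' | hlt'
    · have := hord i j hlt'
      omega
    · have := hord j i hlt'
      omega
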